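/- Every permutation π in the class X that is crossed (not monotone) and positive (begins with its minimum or ends with its maximum) admits a unique decomposition π = a ⊕ θ ⊕ b where a, b are non-negative integers with a + b > 0, a and b denote increasing permutations of those sizes, and θ ∈ X is negative (begins with its maximum or ends with its minimum). -/

import Mathlib

open Equiv Filter

/-- A permutation pattern: a size together with a permutation of that size. -/
abbrev Pattern := Σ n : ℕ, Equiv.Perm (Fin n)

/-- Direct sum of permutations: `α` to the left of and below `β`. -/
def sumPerm {m n : ℕ} (α : Equiv.Perm (Fin m)) (β : Equiv.Perm (Fin n)) :
    Equiv.Perm (Fin (m + n)) :=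
  finSumFinEquiv.symm.trans ((α.sumCongr β).trans finSumFinEquiv)

/-- Skew sum of permutations: `α` to the left of and above `β`. -/
def skewPerm {m n : ℕ} (α : Equiv.Perm (Fin m)) (β : Equiv.Perm (Fin n)) :
    Equiv.Perm (Fin (m + n)) :=
  finSumFinEquiv.symm.trans ((α.sumCongr β).trans
    ((Equiv.sumComm (Fin m) (Fin n)).trans (finSumFinEquiv.trans (finCongr (Nat.add_comm n m)))))

/-- Pattern containment: `Contains p q` means `p` is contained (as a pattern) in `q`. -/
def Contains (p q : Pattern) : Prop :=
  ∃ f : Fin p.1 → Fin q.1, StrictMono f ∧ ∀ s t, p.2 s < p.2 t ↔ q.2 (f s) < q.2 (f t)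

def sumP (p q : Pattern) : Pattern := ⟨p.1 + q.1, sumPerm p.2 q.2⟩
def skewP (p q : Pattern) : Pattern := ⟨p.1 + q.1, skewPerm p.2 q.2⟩

/-- The singleton permutation 1. -/
def onePat : Pattern := ⟨1, 1⟩
/-- The increasing permutation of size `k`. -/
def idPat (k : ℕ) : Pattern := ⟨k, 1⟩
/-- The decreasing permutation of size `k`. -/
def revPat (k : ℕ) : Pattern := ⟨k, Fin.revPerm⟩

def BeginsWithMin (p : Pattern) : Prop := ∃ h : 0 < p.1, p.2 ⟨0, h⟩ = ⟨0, h⟩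
def EndsWithMax (p : Pattern) : Prop :=
  ∃ h : 0 < p.1, p.2 ⟨p.1 - 1, by omega⟩ = ⟨p.1 - 1, by omega⟩
def BeginsWithMax (p : Pattern) : Prop :=
  ∃ h : 0 < p.1, p.2 ⟨0, h⟩ = ⟨p.1 - 1, by omega⟩
def EndsWithMin (p : Pattern) : Prop :=
  ∃ h : 0 < p.1, p.2 ⟨p.1 - 1, by omega⟩ = ⟨0, h⟩

def IsIncreasingP (p : Pattern) : Prop := ∀ i j : Fin p.1, i ≤ j → p.2 i ≤ p.2 j
def IsDecreasingP (p : Pattern) : Prop := ∀ i j : Fin p.1, i ≤ j → p.2 j ≤ p.2 i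
/-- Monotone permutations (increasing or decreasing). -/
def MonotoneP (p : Pattern) : Prop := IsIncreasingP p ∨ IsDecreasingP p
/-- A crossed permutation is one that is not monotone. -/
def CrossedP (p : Pattern) : Prop := ¬ MonotoneP p
/-- Positive: size at least 2, begins with its minimum or ends with its maximum. -/
def PositiveP (p : Pattern) : Prop := 2 ≤ p.1 ∧ (BeginsWithMin p ∨ EndsWithMax p)
/-- Negative: size at least 2, begins with its maximum or ends with its minimum. -/
def NegativeP (p : Pattern) : Prop := 2 ≤ p.1 ∧ (BeginsWithMax p ∨ EndsWithMin p)

/-- The class X: the closure of {1} under π ↦ 1⊕π, 1⊖π, π⊕1, π⊖1. -/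
inductive InX : Pattern → Prop
  | base : InX onePat
  | sumL {p : Pattern} : InX p → InX (sumP onePat p)
  | skewL {p : Pattern} : InX p → InX (skewP onePat p)
  | sumR {p : Pattern} : InX p → InX (sumP p onePat)
  | skewR {p : Pattern} : InX p → InX (skewP p onePat)

/-- every crossed positive element of X decomposes uniquely as
`a ⊕ θ ⊕ b` with `a + b > 0` and θ ∈ X negative. -/
def pval (p : Pattern) (i : ℕ) : ℕ := if h : i < p.1 then (p.2 ⟨i, h⟩ : Fin p.1).val else 0

lemma pval_lt {p : Pattern} {i : ℕ} (h : i < p.1) : pval p i < p.1 := by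
  simp only [pval, dif_pos h]; exact (p.2 ⟨i, h⟩).isLt

lemma pval_inj {p : Pattern} {i j : ℕ} (hi : i < p.1) (hj : j < p.1)
    (h : pval p i = pval p j) : i = j := by
  simp only [pval, dif_pos hi, dif_pos hj] at h
  have := p.2.injective (Fin.ext h)
  exact congrArg Fin.val this

lemma pval_surj {p : Pattern} {j : ℕ} (hj : j < p.1) : ∃ i, i < p.1 ∧ pval p i = j := by
  refine ⟨(p.2.symm ⟨j, hj⟩).val, (p.2.symm ⟨j, hj⟩).isLt, ?_⟩
  simp [pval]

lemma pat_ext {p q : Pattern} (h : p.1 = q.1) (hv : ∀ i, i < p.1 → pval p i = pval q i) :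
    p = q := by
  obtain ⟨n, f⟩ := p; obtain ⟨m, g⟩ := q
  dsimp at h; subst h
  congr 1
  ext i
  have := hv i.val i.isLt
  simpa [pval] using this

lemma pval_sumP (p q : Pattern) (i : ℕ) (hi : i < p.1 + q.1) :
    pval (sumP p q) i = if i < p.1 then pval p i else p.1 + pval q (i - p.1) := by
  have hi' : i < (sumP p q).1 := hi
  rw [pval, dif_pos hi']
  show ((sumPerm p.2 q.2) ⟨i, hi'⟩ : Fin (p.1 + q.1)).val = _
  simp only [sumPerm, Equiv.trans_apply, Equiv.sumCongr_apply]
  split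
  · next h =>
    have e : (⟨i, hi'⟩ : Fin (p.1 + q.1)) = Fin.castAdd q.1 ⟨i, h⟩ := rfl
    rw [e, finSumFinEquiv_symm_apply_castAdd]
    simp [pval, h]
  · next h =>
    have hq : i - p.1 < q.1 := by omega
    have e : (⟨i, hi'⟩ : Fin (p.1 + q.1)) = Fin.natAdd p.1 ⟨i - p.1, hq⟩ := by
      apply Fin.ext; simp; omega
    rw [e, finSumFinEquiv_symm_apply_natAdd]
    simp [pval, hq]

lemma pval_skewP (p q : Pattern) (i : ℕ) (hi : i < p.1 + q.1) :
    pval (skewP p q) i = if i < p.1 then q.1 + pval p i else pval q (i - p.1) := by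
  have hi' : i < (skewP p q).1 := hi
  rw [pval, dif_pos hi']
  show ((skewPerm p.2 q.2) ⟨i, hi'⟩ : Fin (p.1 + q.1)).val = _
  simp only [skewPerm, Equiv.trans_apply, Equiv.sumCongr_apply, Equiv.sumComm_apply,
    finCongr_apply]
  split
  · next h =>
    have e : (⟨i, hi'⟩ : Fin (p.1 + q.1)) = Fin.castAdd q.1 ⟨i, h⟩ := rfl
    rw [e, finSumFinEquiv_symm_apply_castAdd]
    simp [pval, h, Nat.add_comm]
  · next h =>
    have hq : i - p.1 < q.1 := by omega
    have e : (⟨i, hi'⟩ : Fin (p.1 + q.1)) = Fin.natAdd p.1 ⟨i - p.1, hq⟩ := by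
      apply Fin.ext; simp; omega
    rw [e, finSumFinEquiv_symm_apply_natAdd]
    simp [pval, hq]

lemma pval_idPat {k i : ℕ} (h : i < k) : pval (idPat k) i = i := by
  simp [pval, idPat, h]; rfl

lemma pval_onePat : pval onePat 0 = 0 := by
  simp [pval, onePat]

lemma beginsWithMin_iff {p : Pattern} : BeginsWithMin p ↔ 0 < p.1 ∧ pval p 0 = 0 := by
  constructor
  · rintro ⟨h, he⟩; exact ⟨h, by simp [pval, h, he]⟩
  · rintro ⟨h, he⟩; exact ⟨h, Fin.ext (by simpa [pval, h] using he)⟩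

lemma endsWithMax_iff {p : Pattern} : EndsWithMax p ↔ 0 < p.1 ∧ pval p (p.1 - 1) = p.1 - 1 := by
  constructor
  · rintro ⟨h, he⟩
    refine ⟨h, ?_⟩
    have hlt : p.1 - 1 < p.1 := by omega
    simp [pval, hlt, he]
  · rintro ⟨h, he⟩
    have hlt : p.1 - 1 < p.1 := by omega
    exact ⟨h, Fin.ext (by simpa [pval, hlt] using he)⟩

lemma beginsWithMax_iff {p : Pattern} : BeginsWithMax p ↔ 0 < p.1 ∧ pval p 0 = p.1 - 1 := by
  constructor
  · rintro ⟨h, he⟩; exact ⟨h, by simp [pval, h, he]⟩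
  · rintro ⟨h, he⟩; exact ⟨h, Fin.ext (by simpa [pval, h] using he)⟩

lemma endsWithMin_iff {p : Pattern} : EndsWithMin p ↔ 0 < p.1 ∧ pval p (p.1 - 1) = 0 := by
  constructor
  · rintro ⟨h, he⟩
    refine ⟨h, ?_⟩
    have hlt : p.1 - 1 < p.1 := by omega
    simp [pval, hlt, he]
  · rintro ⟨h, he⟩
    have hlt : p.1 - 1 < p.1 := by omega
    exact ⟨h, Fin.ext (by simpa [pval, hlt] using he)⟩

lemma inc_of_id {p : Pattern} (h : ∀ i, i < p.1 → pval p i = i) : IsIncreasingP p := by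
  intro i j hij
  have hi := h i.val i.isLt
  have hj := h j.val j.isLt
  simp only [pval, dif_pos i.isLt, dif_pos j.isLt, Fin.eta] at hi hj
  exact Fin.le_def.mpr (by rw [hi, hj]; exact hij)

lemma sm_le {n : ℕ} {f : Fin n → Fin n} (hf : StrictMono f) :
    ∀ k (hk : k < n), k ≤ (f ⟨k, hk⟩ : Fin n).val := by
  intro k
  induction k with
  | zero => intro _; exact Nat.zero_le _
  | succ k IH =>
    intro hk
    have hk' : k < n := by omega
    have h1 := IH hk'
    have h2 : f ⟨k, hk'⟩ < f ⟨k + 1, hk⟩ := hf (by simp [Fin.lt_def])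
    have h3 : (f ⟨k, hk'⟩ : Fin n).val < (f ⟨k + 1, hk⟩ : Fin n).val := h2
    omega

lemma id_of_inc {p : Pattern} (h : IsIncreasingP p) : ∀ i, i < p.1 → pval p i = i := by
  have hmono : Monotone p.2 := fun i j hij => h i j hij
  have hsm : StrictMono p.2 := fun i j hij =>
    lt_of_le_of_ne (hmono hij.le) (fun e => absurd (p.2.injective e) hij.ne)
  have hmono' : Monotone p.2.symm := by
    intro i j hij
    rcases le_total (p.2.symm i) (p.2.symm j) with h' | h'
    · exact h'
    · have hji : j ≤ i := by
        have := hmono h'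
        simpa using this
      have : i = j := le_antisymm hij hji
      exact this ▸ le_refl _
  have hsm' : StrictMono p.2.symm := fun i j hij =>
    lt_of_le_of_ne (hmono' hij.le) (fun e => absurd (p.2.symm.injective e) hij.ne)
  intro i hi
  have h1 := sm_le hsm i hi
  have h2 := sm_le hsm' (p.2 ⟨i, hi⟩).val (p.2 ⟨i, hi⟩).isLt
  have h3 : ((p.2.symm ⟨(p.2 ⟨i, hi⟩).val, (p.2 ⟨i, hi⟩).isLt⟩ : Fin p.1) : ℕ) = i := by
    simp [Fin.eta]
  simp only [pval, dif_pos hi]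
  omega

lemma dec_max {p : Pattern} (h : IsDecreasingP p) (hp : 0 < p.1) : pval p 0 = p.1 - 1 := by
  obtain ⟨i, hi, hvi⟩ := pval_surj (j := p.1 - 1) (p := p) (by omega)
  have h0 : (0 : ℕ) < p.1 := hp
  have := h ⟨0, h0⟩ ⟨i, hi⟩ (by simp [Fin.le_def])
  have hle : pval p i ≤ pval p 0 := by
    simp only [pval, dif_pos hi, dif_pos h0]; exact this
  have := pval_lt (p := p) h0
  omega

lemma dec_min {p : Pattern} (h : IsDecreasingP p) (hp : 0 < p.1) : pval p (p.1 - 1) = 0 := by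
  obtain ⟨i, hi, hvi⟩ := pval_surj (j := 0) (p := p) hp
  have hlast : p.1 - 1 < p.1 := by omega
  have := h ⟨i, hi⟩ ⟨p.1 - 1, hlast⟩ (Fin.le_def.mpr (by simp; omega))
  have hle : pval p (p.1 - 1) ≤ pval p i := by
    simp only [pval, dif_pos hlast, dif_pos hi]; exact this
  omega

lemma InX_pos {p : Pattern} (h : InX p) : 0 < p.1 := by
  induction h with
  | base => exact Nat.one_pos
  | sumL _ ih => exact Nat.lt_of_lt_of_le ih (Nat.le_add_left _ _)
  | skewL _ ih => exact Nat.lt_of_lt_of_le ih (Nat.le_add_left _ _)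
  | sumR _ ih => exact Nat.lt_of_lt_of_le ih (Nat.le_add_right _ _)
  | skewR _ ih => exact Nat.lt_of_lt_of_le ih (Nat.le_add_right _ _)

@[simp] lemma onePat_fst : onePat.1 = 1 := rfl
@[simp] lemma idPat_fst (k : ℕ) : (idPat k).1 = k := rfl
@[simp] lemma sumP_fst (p q : Pattern) : (sumP p q).1 = p.1 + q.1 := rfl
@[simp] lemma skewP_fst (p q : Pattern) : (skewP p q).1 = p.1 + q.1 := rfl

lemma posneg {p : Pattern} (hX : InX p) (h2 : 2 ≤ p.1) : PositiveP p ∨ NegativeP p := by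
  cases hX with
  | base => simp only [onePat_fst] at h2; omega
  | @sumL q hq =>
    left
    refine ⟨h2, Or.inl (beginsWithMin_iff.mpr ⟨by omega, ?_⟩)⟩
    rw [pval_sumP onePat q 0 (by simp only [onePat_fst]; omega)]
    rw [onePat_fst]
    rw [if_pos (by omega : (0:ℕ) < 1)]
    exact pval_onePat
  | @skewL q hq =>
    right
    have hq1 : 0 < q.1 := InX_pos hq
    refine ⟨h2, Or.inl (beginsWithMax_iff.mpr ⟨by omega, ?_⟩)⟩
    rw [pval_skewP onePat q 0 (by simp only [onePat_fst]; omega)]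
    simp only [skewP_fst]; rw [onePat_fst]
    rw [if_pos (by omega : (0:ℕ) < 1), pval_onePat]
    omega
  | @sumR q hq =>
    left
    have hq1 : 0 < q.1 := InX_pos hq
    refine ⟨h2, Or.inr (endsWithMax_iff.mpr ⟨by omega, ?_⟩)⟩
    simp only [sumP_fst, onePat_fst]
    have e : q.1 + 1 - 1 = q.1 := by omega
    rw [e, pval_sumP q onePat q.1 (by simp only [onePat_fst]; omega)]
    rw [if_neg (lt_irrefl q.1), Nat.sub_self, pval_onePat]
    omega
  | @skewR q hq =>
    right
    have hq1 : 0 < q.1 := InX_pos hq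
    refine ⟨h2, Or.inr (endsWithMin_iff.mpr ⟨by omega, ?_⟩)⟩
    simp only [skewP_fst, onePat_fst]
    have e : q.1 + 1 - 1 = q.1 := by omega
    rw [e, pval_skewP q onePat q.1 (by simp only [onePat_fst]; omega)]
    rw [if_neg (lt_irrefl q.1), Nat.sub_self, pval_onePat]

lemma pval_triple (a b : ℕ) (θ : Pattern) {i : ℕ} (hi : i < a + θ.1 + b) :
    pval (sumP (sumP (idPat a) θ) (idPat b)) i =
      if i < a then i else if i < a + θ.1 then a + pval θ (i - a) else i := by
  have e1 : pval (sumP (sumP (idPat a) θ) (idPat b)) i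
      = if i < a + θ.1 then pval (sumP (idPat a) θ) i
        else (a + θ.1) + pval (idPat b) (i - (a + θ.1)) := pval_sumP _ _ i hi
  rw [e1]
  by_cases h2 : i < a + θ.1
  · rw [if_pos h2]
    have e2 : pval (sumP (idPat a) θ) i
        = if i < a then pval (idPat a) i else a + pval θ (i - a) := pval_sumP _ _ i h2
    rw [e2]
    by_cases h3 : i < a
    · rw [if_pos h3, if_pos h3, pval_idPat h3]
    · rw [if_neg h3, if_neg h3, if_pos h2]
  · rw [if_neg h2, if_neg (show ¬ i < a by omega), if_neg h2,
      pval_idPat (show i - (a + θ.1) < b by omega)]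
    omega

lemma triple_ext {p : Pattern} (a b : ℕ) (θ : Pattern)
    (hsz : p.1 = a + θ.1 + b)
    (hv : ∀ i, i < p.1 →
      pval p i = if i < a then i else if i < a + θ.1 then a + pval θ (i - a) else i) :
    p = sumP (sumP (idPat a) θ) (idPat b) := by
  refine pat_ext (by simp only [sumP_fst, idPat_fst]; omega) ?_
  intro i hi
  rw [hv i hi, ← pval_triple a b θ (by omega)]

lemma triple_val {p : Pattern} (a b : ℕ) (θ : Pattern)
    (heq : p = sumP (sumP (idPat a) θ) (idPat b)) :
    p.1 = a + θ.1 + b ∧ ∀ i, i < p.1 →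
      pval p i = if i < a then i else if i < a + θ.1 then a + pval θ (i - a) else i := by
  subst heq
  refine ⟨by simp only [sumP_fst, idPat_fst], ?_⟩
  intro i hi
  simp only [sumP_fst, idPat_fst] at hi
  exact pval_triple a b θ (by omega)

lemma neg_first {θ : Pattern} (hneg : NegativeP θ) : pval θ 0 ≠ 0 := by
  obtain ⟨h2, hc⟩ := hneg
  rcases hc with h | h
  · have := (beginsWithMax_iff.mp h).2
    omega
  · have he := (endsWithMin_iff.mp h).2
    intro h0
    have := pval_inj (p := θ) (by omega : (0:ℕ) < θ.1) (by omega : θ.1 - 1 < θ.1)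
      (by rw [h0, he])
    omega

lemma neg_last {θ : Pattern} (hneg : NegativeP θ) : pval θ (θ.1 - 1) ≠ θ.1 - 1 := by
  obtain ⟨h2, hc⟩ := hneg
  rcases hc with h | h
  · have hb := (beginsWithMax_iff.mp h).2
    intro h0
    have := pval_inj (p := θ) (by omega : θ.1 - 1 < θ.1) (by omega : (0:ℕ) < θ.1)
      (by rw [h0, hb])
    omega
  · have := (endsWithMin_iff.mp h).2
    omega

lemma exists_decomp : ∀ p : Pattern, InX p → CrossedP p → PositiveP p →
    ∃ a b θ, 0 < a + b ∧ InX θ ∧ NegativeP θ ∧ p = sumP (sumP (idPat a) θ) (idPat b) := by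
  intro p hX
  induction hX with
  | base =>
    intro hc _
    exfalso; apply hc; left
    intro i j hij
    have hi := i.isLt
    have hj := j.isLt
    simp only [onePat_fst] at hi hj
    have : i = j := Fin.ext (by omega)
    rw [this]
  | @sumL q hq ih =>
    intro hc hp
    have hq1 : 0 < q.1 := InX_pos hq
    by_cases hq2 : 2 ≤ q.1
    · by_cases hneg : NegativeP q
      · refine ⟨1, 0, q, by omega, hq, hneg, ?_⟩
        apply triple_ext
        · simp only [sumP_fst, onePat_fst]; omega
        · intro i hi
          simp only [sumP_fst, onePat_fst] at hi
          rw [pval_sumP _ _ i (by simp only [onePat_fst]; omega)]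
          rw [onePat_fst]
          by_cases h0 : i < 1
          · have : i = 0 := by omega
            subst this
            simp [pval_onePat]
          · rw [if_neg h0, if_neg h0, if_pos (show i < 1 + q.1 by omega)]
      · have hpos : PositiveP q := by
          rcases posneg hq hq2 with h | h
          · exact h
          · exact absurd h hneg
        have hcr : CrossedP q := by
          rintro (hic | hdec)
          · apply hc; left
            apply inc_of_id
            intro i hi
            simp only [sumP_fst, onePat_fst] at hi
            rw [pval_sumP _ _ i (by simp only [onePat_fst]; omega)]
            rw [onePat_fst]
            have hidq := id_of_inc hic
            by_cases h0 : i < 1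
            · have : i = 0 := by omega
              subst this
              rw [if_pos h0]; exact pval_onePat
            · rw [if_neg h0, hidq (i - 1) (by omega)]; omega
          · exact hneg ⟨hq2, Or.inl (beginsWithMax_iff.mpr ⟨by omega, dec_max hdec (by omega)⟩)⟩
        obtain ⟨a, b, θ, hab, hθX, hθneg, heq⟩ := ih hcr hpos
        obtain ⟨hsz, hv⟩ := triple_val a b θ heq
        refine ⟨a + 1, b, θ, by omega, hθX, hθneg, ?_⟩
        have hθ2 := hθneg.1
        apply triple_ext
        · simp only [sumP_fst, onePat_fst]; omega
        · intro i hi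
          simp only [sumP_fst, onePat_fst] at hi
          rw [pval_sumP _ _ i (by simp only [onePat_fst]; omega)]
          rw [onePat_fst]
          by_cases h0 : i < 1
          · have : i = 0 := by omega
            subst this
            rw [if_pos h0, if_pos (show (0:ℕ) < a + 1 by omega)]
            exact pval_onePat
          · rw [if_neg h0, hv (i - 1) (by omega)]
            by_cases h1 : i - 1 < a
            · rw [if_pos h1, if_pos (show i < a + 1 by omega)]; omega
            · rw [if_neg h1, if_neg (show ¬ i < a + 1 by omega)]
              by_cases hmid : i - 1 < a + θ.1
              · rw [if_pos hmid, if_pos (show i < a + 1 + θ.1 by omega)]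
                rw [show i - 1 - a = i - (a + 1) from by omega]
                omega
              · rw [if_neg hmid, if_neg (show ¬ i < a + 1 + θ.1 by omega)]
                omega
    · exfalso; apply hc; left
      apply inc_of_id
      intro i hi
      simp only [sumP_fst, onePat_fst] at hi
      have hone : q.1 = 1 := by omega
      have hq0 : pval q 0 = 0 := by
        have := pval_lt (p := q) (i := 0) (by omega)
        omega
      rw [pval_sumP _ _ i (by simp only [onePat_fst]; omega)]
      rw [onePat_fst]
      by_cases h0 : i < 1
      · have : i = 0 := by omega
        subst this
        rw [if_pos h0]; exact pval_onePat
      · rw [if_neg h0]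
        have : i = 1 := by omega
        subst this
        simp [hq0]
  | @sumR q hq ih =>
    intro hc hp
    have hq1 : 0 < q.1 := InX_pos hq
    by_cases hq2 : 2 ≤ q.1
    · by_cases hneg : NegativeP q
      · refine ⟨0, 1, q, by omega, hq, hneg, ?_⟩
        apply triple_ext
        · simp only [sumP_fst, onePat_fst]; omega
        · intro i hi
          simp only [sumP_fst, onePat_fst] at hi
          rw [pval_sumP _ _ i (by simp only [onePat_fst]; omega)]
          by_cases h0 : i < q.1
          · rw [if_pos h0, if_neg (show ¬ i < 0 by omega), if_pos (show i < 0 + q.1 by omega),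
              Nat.sub_zero, Nat.zero_add]
          · rw [if_neg h0, if_neg (show ¬ i < 0 by omega),
              if_neg (show ¬ i < 0 + q.1 by omega),
              show i - q.1 = 0 from by omega, pval_onePat]
            omega
      · have hpos : PositiveP q := by
          rcases posneg hq hq2 with h | h
          · exact h
          · exact absurd h hneg
        have hcr : CrossedP q := by
          rintro (hic | hdec)
          · apply hc; left
            apply inc_of_id
            intro i hi
            simp only [sumP_fst, onePat_fst] at hi
            rw [pval_sumP _ _ i (by simp only [onePat_fst]; omega)]
            have hidq := id_of_inc hic
            by_cases h0 : i < q.1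
            · rw [if_pos h0, hidq i h0]
            · rw [if_neg h0, show i - q.1 = 0 from by omega, pval_onePat]
              omega
          · exact hneg ⟨hq2, Or.inl (beginsWithMax_iff.mpr ⟨by omega, dec_max hdec (by omega)⟩)⟩
        obtain ⟨a, b, θ, hab, hθX, hθneg, heq⟩ := ih hcr hpos
        obtain ⟨hsz, hv⟩ := triple_val a b θ heq
        refine ⟨a, b + 1, θ, by omega, hθX, hθneg, ?_⟩
        have hθ2 := hθneg.1
        apply triple_ext
        · simp only [sumP_fst, onePat_fst]; omega
        · intro i hi
          simp only [sumP_fst, onePat_fst] at hi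
          rw [pval_sumP _ _ i (by simp only [onePat_fst]; omega)]
          by_cases h0 : i < q.1
          · rw [if_pos h0, hv i (by omega)]
          · rw [if_neg h0, show i - q.1 = 0 from by omega, pval_onePat,
              if_neg (show ¬ i < a by omega), if_neg (show ¬ i < a + θ.1 by omega)]
            omega
    · exfalso; apply hc; left
      apply inc_of_id
      intro i hi
      simp only [sumP_fst, onePat_fst] at hi
      have hone : q.1 = 1 := by omega
      have hq0 : pval q 0 = 0 := by
        have := pval_lt (p := q) (i := 0) (by omega)
        omega
      rw [pval_sumP _ _ i (by simp only [onePat_fst]; omega)]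
      by_cases h0 : i < q.1
      · have : i = 0 := by omega
        subst this
        rw [if_pos h0]; exact hq0
      · rw [if_neg h0, show i - q.1 = 0 from by omega, pval_onePat]
        omega
  | @skewL q hq ih =>
    intro hc hp
    exfalso
    have hq1 : 0 < q.1 := InX_pos hq
    obtain ⟨h2, hcor⟩ := hp
    simp only [skewP_fst, onePat_fst] at h2
    have h0 : pval (skewP onePat q) 0 = q.1 := by
      rw [pval_skewP _ _ 0 (by simp only [onePat_fst]; omega)]
      rw [onePat_fst]
      rw [if_pos (by omega : (0:ℕ) < 1), pval_onePat]
      omega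
    rcases hcor with h | h
    · have := (beginsWithMin_iff.mp h).2
      omega
    · have he := (endsWithMax_iff.mp h).2
      simp only [skewP_fst, onePat_fst] at he
      rw [show 1 + q.1 - 1 = q.1 from by omega] at he
      rw [pval_skewP _ _ q.1 (by simp only [onePat_fst]; omega)] at he
      rw [onePat_fst] at he
      rw [if_neg (show ¬ q.1 < 1 by omega)] at he
      have := pval_lt (p := q) (i := q.1 - 1) (by omega)
      omega
  | @skewR q hq ih =>
    intro hc hp
    exfalso
    have hq1 : 0 < q.1 := InX_pos hq
    obtain ⟨h2, hcor⟩ := hp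
    simp only [skewP_fst, onePat_fst] at h2
    rcases hcor with h | h
    · have hb := (beginsWithMin_iff.mp h).2
      rw [pval_skewP _ _ 0 (by simp only [onePat_fst]; omega)] at hb
      simp only [onePat_fst] at hb
      rw [if_pos (show (0:ℕ) < q.1 by omega)] at hb
      omega
    · have he := (endsWithMax_iff.mp h).2
      simp only [skewP_fst, onePat_fst] at he
      rw [show q.1 + 1 - 1 = q.1 from by omega] at he
      rw [pval_skewP _ _ q.1 (by simp only [onePat_fst]; omega)] at he
      rw [if_neg (lt_irrefl q.1), Nat.sub_self, pval_onePat] at he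
      omega

theorem crossed_positive_unique_decomposition (p : Pattern)
    (hX : InX p) (hc : CrossedP p) (hp : PositiveP p) :
    ∃! x : ℕ × ℕ × Pattern,
      0 < x.1 + x.2.1 ∧ InX x.2.2 ∧ NegativeP x.2.2 ∧
        p = sumP (sumP (idPat x.1) x.2.2) (idPat x.2.1) := by
  obtain ⟨a, b, θ, hab, hθX, hθneg, heq⟩ := exists_decomp p hX hc hp
  refine ⟨⟨a, b, θ⟩, ⟨hab, hθX, hθneg, heq⟩, ?_⟩
  rintro ⟨a', b', θ'⟩ ⟨hab', hθX', hθneg', heq'⟩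
  replace hab' : 0 < a' + b' := hab'
  replace hθX' : InX θ' := hθX'
  replace hθneg' : NegativeP θ' := hθneg'
  replace heq' : p = sumP (sumP (idPat a') θ') (idPat b') := heq'
  obtain ⟨hsz, hv⟩ := triple_val a b θ heq
  obtain ⟨hsz', hv'⟩ := triple_val a' b' θ' heq'
  have h2 : 2 ≤ θ.1 := hθneg.1
  have h2' : 2 ≤ θ'.1 := hθneg'.1
  have hfa : pval p a ≠ a := by
    rw [hv a (by omega), if_neg (lt_irrefl a), if_pos (show a < a + θ.1 by omega),
      Nat.sub_self]
    have := neg_first hθneg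
    omega
  have hfa' : pval p a' ≠ a' := by
    rw [hv' a' (by omega), if_neg (lt_irrefl a'), if_pos (show a' < a' + θ'.1 by omega),
      Nat.sub_self]
    have := neg_first hθneg'
    omega
  have haa : a = a' := by
    rcases Nat.lt_trichotomy a a' with h | h | h
    · exact absurd (by rw [hv' a (by omega), if_pos h]) hfa
    · exact h
    · exact absurd (by rw [hv a' (by omega), if_pos h]) hfa'
  have hfb : pval p (a + θ.1 - 1) ≠ a + θ.1 - 1 := by
    rw [hv _ (by omega), if_neg (show ¬ a + θ.1 - 1 < a by omega),
      if_pos (show a + θ.1 - 1 < a + θ.1 by omega),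
      show a + θ.1 - 1 - a = θ.1 - 1 from by omega]
    have := neg_last hθneg
    omega
  have hfb' : pval p (a' + θ'.1 - 1) ≠ a' + θ'.1 - 1 := by
    rw [hv' _ (by omega), if_neg (show ¬ a' + θ'.1 - 1 < a' by omega),
      if_pos (show a' + θ'.1 - 1 < a' + θ'.1 by omega),
      show a' + θ'.1 - 1 - a' = θ'.1 - 1 from by omega]
    have := neg_last hθneg'
    omega
  have hbb : b = b' := by
    rcases Nat.lt_trichotomy b b' with h | h | h
    · refine absurd ?_ hfb
      rw [hv' _ (by omega), if_neg (show ¬ a + θ.1 - 1 < a' by omega),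
        if_neg (show ¬ a + θ.1 - 1 < a' + θ'.1 by omega)]
    · exact h
    · refine absurd ?_ hfb'
      rw [hv _ (by omega), if_neg (show ¬ a' + θ'.1 - 1 < a by omega),
        if_neg (show ¬ a' + θ'.1 - 1 < a + θ.1 by omega)]
  have hθeq : θ' = θ := by
    refine pat_ext (by omega) ?_
    intro i hi
    have e1 := hv (a + i) (by omega)
    have e2 := hv' (a' + i) (by omega)
    rw [if_neg (show ¬ a + i < a by omega), if_pos (show a + i < a + θ.1 by omega),
      show a + i - a = i from by omega] at e1
    rw [if_neg (show ¬ a' + i < a' by omega), if_pos (show a' + i < a' + θ'.1 by omega),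
      show a' + i - a' = i from by omega] at e2
    rw [haa] at e1
    omega
  rw [haa, hbb, ← hθeq]
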